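/- The overlap integral is at most half the state-ball volume: Let d ≥ 2 be a natural number, let ε ∈ (0, 1/4), and let k be a natural number with k ≥ 16·(d/ε⁴)·log(1/ε). Then C(d+k−1,k) · ∫₀^{√(1−ε²)} x^k·(d−1)·(1−x)^{d−2} dx ≤ (1/2)·ε^{2d−2}, where C(d+k−1,k) is the binomial coefficient and the integral is the Lebesgue integral over the real interval [0, √(1−ε²)]. -/

import Mathlib

open MeasureTheory
open scoped ENNReal Matrix InnerProductSpace

namespace Paper

noncomputable section

instance matMS (d : ℕ) : MeasurableSpace (Matrix (Fin d) (Fin d) ℂ) := borel _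
instance matBS (d : ℕ) : BorelSpace (Matrix (Fin d) (Fin d) ℂ) := ⟨rfl⟩

/-- The unitary group `U(d)`. -/
abbrev UG (d : ℕ) := Matrix.unitaryGroup (Fin d) ℂ

/-- ℓ²→ℓ² operator norm (spectral norm) of a matrix. -/
def opNorm {d : ℕ} (A : Matrix (Fin d) (Fin d) ℂ) : ℝ :=
  ‖Matrix.toEuclideanCLM (𝕜 := ℂ) A‖

/-- Phase-invariant distance on unitary channels. -/
def D {d : ℕ} (U V : UG d) : ℝ :=
  ⨅ z : {z : ℂ // ‖z‖ = 1},
    opNorm ((U : Matrix (Fin d) (Fin d) ℂ) - z.val • (V : Matrix (Fin d) (Fin d) ℂ))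

/-- Closed ball of radius `r` around `V` in `U(d)` for the distance `D`. -/
def ball {d : ℕ} (V : UG d) (r : ℝ) : Set (UG d) := {U | D U V ≤ r}

/-- Haar volume of a ball of radius `r`. -/
def Vol {d : ℕ} (μ : Measure (UG d)) (r : ℝ) : ℝ≥0∞ := μ (ball 1 r)

/-- `(α,β)`-equidistribution of `ν` at scale `ε` (relative to the Haar measure `μ`). -/
def Equidistributed {d : ℕ} (μ ν : Measure (UG d)) (α β ε : ℝ) : Prop :=
  ∀ (V : UG d) (r : ℝ), ε ≤ r →
    Vol μ (α * r) ≤ ν (ball V r) ∧ ν (ball V r) ≤ Vol μ (β * r)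

/-- Products of at most `r` elements of the gate set `𝒢`. -/
def wordsLe {d : ℕ} (𝒢 : Finset (UG d)) (r : ℕ) : Set (UG d) :=
  {W | ∃ l : List (UG d), l.length ≤ r ∧ (∀ g ∈ l, g ∈ 𝒢) ∧ l.prod = W}

/-- Convolution of two measures on a monoid: pushforward of the product measure under
multiplication. -/
def mconv {G : Type*} [Monoid G] [MeasurableSpace G] (ν ϑ : Measure G) : Measure G :=
  (ν.prod ϑ).map (fun p => p.1 * p.2)

/-- `t`-fold convolution power of a measure. -/
def convPow {G : Type*} [Monoid G] [MeasurableSpace G] (ν : Measure G) : ℕ → Measure G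
  | 0 => Measure.dirac 1
  | n + 1 => mconv (convPow ν n) ν

/-- The random walk `U_t = V_t ⋯ V_1`. -/
def walk {d : ℕ} {Ω : Type*} (V : ℕ → Ω → UG d) (t : ℕ) (ω : Ω) : UG d :=
  ((List.range t).map (fun i => V (t - i) ω)).prod

/-- Euclidean space `ℂ^d`. -/
abbrev EV (d : ℕ) := EuclideanSpace ℂ (Fin d)

instance evMS (d : ℕ) : MeasurableSpace (EV d) := borel _
instance evBS (d : ℕ) : BorelSpace (EV d) := ⟨rfl⟩

/-- Distance on pure states. -/
def dS {d : ℕ} (ψ φ : EV d) : ℝ := Real.sqrt (1 - ‖⟪ψ, φ⟫_ℂ‖ ^ 2)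

/-- Ball of radius `r` around the state `φ`, inside the set of unit vectors. -/
def ballS {d : ℕ} (φ : EV d) (r : ℝ) : Set (EV d) := {ψ | ‖ψ‖ = 1 ∧ dS ψ φ ≤ r}

/-- Action of a unitary matrix on a vector. -/
def act {d : ℕ} (U : UG d) (ψ : EV d) : EV d :=
  Matrix.toEuclideanLin (U : Matrix (Fin d) (Fin d) ℂ) ψ

/-- Topological support of a measure. -/
def msupport {X : Type*} [TopologicalSpace X] [MeasurableSpace X] (ν : Measure X) : Set X :=
  {x | ∀ U : Set X, IsOpen U → x ∈ U → ν U ≠ 0}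

/-- Packing number (as an extended nonnegative real): supremum of cardinalities of finite
subsets of `Y` whose elements are pairwise at `dist`-distance at least `ε`. -/
def Npack {X : Type*} (dist : X → X → ℝ) (Y : Set X) (ε : ℝ) : ℝ≥0∞ :=
  ⨆ (S : Finset X) (_ : ↑S ⊆ Y ∧ (S : Set X).Pairwise fun x y => ε ≤ dist x y),
    (S.card : ℝ≥0∞)

end
end Paper

namespace Paper
open ProbabilityTheory

set_option maxHeartbeats 1000000 in
theorem stmt6 {d k : ℕ} (hd : 2 ≤ d) {ε : ℝ} (hε0 : 0 < ε) (hε1 : ε < 1 / 4)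
    (hk : 16 * (d : ℝ) / ε ^ 4 * Real.log (1 / ε) ≤ (k : ℝ)) :
    ((d + k - 1).choose k : ℝ) *
        ∫ x in Set.Icc (0 : ℝ) (Real.sqrt (1 - ε ^ 2)),
          x ^ k * ((d : ℝ) - 1) * (1 - x) ^ (d - 2)
      ≤ (1 / 2) * ε ^ (2 * d - 2) := by
  have hε1' : ε < 1 := by linarith
  have hε2 : ε ^ 2 < 1 / 16 := by nlinarith
  have hε2pos : (0:ℝ) < ε ^ 2 := by positivity
  set u : ℝ := 1 / ε with hu_def
  have hu4 : (4:ℝ) < u := by rw [hu_def, lt_div_iff₀ hε0]; linarith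
  have hu1 : (1:ℝ) < u := by linarith
  have hu0 : (0:ℝ) < u := by linarith
  set L : ℝ := Real.log (1 / ε) with hL_def
  have hL1 : (1:ℝ) ≤ L := by
    rw [hL_def, Real.le_log_iff_exp_le (by positivity)]
    calc Real.exp 1 ≤ 2.7182818286 := Real.exp_one_lt_d9.le
      _ ≤ 4 := by norm_num
      _ ≤ 1 / ε := hu4.le
  have hd1 : (1:ℝ) ≤ (d:ℝ) - 1 := by
    have : (2:ℝ) ≤ d := by exact_mod_cast hd
    linarith
  have hdpos : (0:ℝ) < d := by linarith
  have hk0 : (0:ℝ) ≤ (k:ℝ) := Nat.cast_nonneg k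
  have hε4 : ε ^ 4 ≤ 1 := by nlinarith
  -- k is large
  have hkε : 16 * (d:ℝ) * L ≤ (k:ℝ) * ε ^ 4 := by
    have h := mul_le_mul_of_nonneg_right hk (pow_pos hε0 4).le
    calc 16 * (d:ℝ) * L = 16 * (d:ℝ) / ε ^ 4 * L * ε ^ 4 := by field_simp
      _ ≤ (k:ℝ) * ε ^ 4 := h
  have hdkR : (d:ℝ) ≤ (k:ℝ) := by nlinarith
  have hdk : d ≤ k := by exact_mod_cast hdkR
  set t : ℝ := ε ^ 2 * k / 4 with ht_def
  have ht0 : (0:ℝ) ≤ t := by positivity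
  have h64 : 64 * (d:ℝ) * L ≤ t := by
    have h2 := mul_le_mul_of_nonneg_left hε2.le (mul_nonneg hk0 hε2pos.le)
    -- h2 : k * ε^2 * ε^2 ≤ k * ε^2 * (1/16)
    rw [ht_def]
    nlinarith
  -- the integral bound
  set a : ℝ := Real.sqrt (1 - ε ^ 2) with ha_def
  have h1ε : (0:ℝ) ≤ 1 - ε ^ 2 := by nlinarith
  have ha0 : 0 ≤ a := Real.sqrt_nonneg _
  have ha1 : a ≤ 1 := by
    nlinarith [Real.sq_sqrt h1ε, ha0]
  have hnonneg : ∀ x ∈ Set.Icc (0:ℝ) a, 0 ≤ x ^ k * ((d:ℝ) - 1) * (1 - x) ^ (d - 2) := by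
    intro x hx
    obtain ⟨hx0, hxa⟩ := hx
    have hx1 : x ≤ 1 := hxa.trans ha1
    have h1x : (0:ℝ) ≤ 1 - x := by linarith
    exact mul_nonneg (mul_nonneg (pow_nonneg hx0 _) (by linarith)) (pow_nonneg h1x _)
  have hInt0 : 0 ≤ ∫ x in Set.Icc (0:ℝ) a, x ^ k * ((d:ℝ) - 1) * (1 - x) ^ (d - 2) :=
    setIntegral_nonneg measurableSet_Icc hnonneg
  have hInt : (∫ x in Set.Icc (0:ℝ) a, x ^ k * ((d:ℝ) - 1) * (1 - x) ^ (d - 2))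
      ≤ a ^ k * ((d:ℝ) - 1) := by
    have hC : ∀ x ∈ Set.Icc (0:ℝ) a,
        ‖x ^ k * ((d:ℝ) - 1) * (1 - x) ^ (d - 2)‖ ≤ a ^ k * ((d:ℝ) - 1) := by
      intro x hx
      obtain ⟨hx0, hxa⟩ := hx
      have hx1 : x ≤ 1 := hxa.trans ha1
      have h1x : (0:ℝ) ≤ 1 - x := by linarith
      rw [Real.norm_of_nonneg (hnonneg x ⟨hx0, hxa⟩)]
      have hb1 : x ^ k ≤ a ^ k := pow_le_pow_left₀ hx0 hxa k
      have hb2 : (1 - x) ^ (d - 2) ≤ 1 := pow_le_one₀ h1x (by linarith)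
      calc x ^ k * ((d:ℝ) - 1) * (1 - x) ^ (d - 2)
          ≤ x ^ k * ((d:ℝ) - 1) * 1 :=
            mul_le_mul_of_nonneg_left hb2 (mul_nonneg (pow_nonneg hx0 _) (by linarith))
        _ = x ^ k * ((d:ℝ) - 1) := mul_one _
        _ ≤ a ^ k * ((d:ℝ) - 1) := mul_le_mul_of_nonneg_right hb1 (by linarith)
    have hmeas : AEStronglyMeasurable
        (fun x : ℝ => x ^ k * ((d:ℝ) - 1) * (1 - x) ^ (d - 2))
        (volume.restrict (Set.Icc (0:ℝ) a)) :=
      (((continuous_pow k).mul continuous_const).mul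
        ((continuous_const.sub continuous_id).pow (d - 2))).aestronglyMeasurable
    have hvol : volume (Set.Icc (0:ℝ) a) < ⊤ := by
      rw [Real.volume_Icc]; exact ENNReal.ofReal_lt_top
    have hnorm := norm_setIntegral_le_of_norm_le_const hvol hC
    rw [Real.norm_eq_abs] at hnorm
    have hC0 : 0 ≤ a ^ k * ((d:ℝ) - 1) := mul_nonneg (pow_nonneg ha0 k) (by linarith)
    calc (∫ x in Set.Icc (0:ℝ) a, x ^ k * ((d:ℝ) - 1) * (1 - x) ^ (d - 2))
        ≤ |∫ x in Set.Icc (0:ℝ) a, x ^ k * ((d:ℝ) - 1) * (1 - x) ^ (d - 2)| := le_abs_self _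
      _ ≤ a ^ k * ((d:ℝ) - 1) * (volume (Set.Icc (0:ℝ) a)).toReal := hnorm
      _ = a ^ k * ((d:ℝ) - 1) * a := by
          rw [Real.volume_Icc, ENNReal.toReal_ofReal (by linarith)]; ring_nf
      _ ≤ a ^ k * ((d:ℝ) - 1) * 1 := mul_le_mul_of_nonneg_left ha1 hC0
      _ = a ^ k * ((d:ℝ) - 1) := mul_one _
  -- binomial bound
  have hsymm : (d + k - 1).choose k = (d + k - 1).choose (d - 1) := by
    have h1 : k ≤ d + k - 1 := by omega
    have h2 : d + k - 1 - k = d - 1 := by omega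
    rw [← Nat.choose_symm h1, h2]
  have hnat : (d - 1).factorial * (d + k - 1).choose (d - 1) ≤ (2 * k) ^ (d - 1) := by
    calc (d - 1).factorial * (d + k - 1).choose (d - 1)
        = (d + k - 1).descFactorial (d - 1) :=
          (Nat.descFactorial_eq_factorial_mul_choose _ _).symm
      _ ≤ (d + k - 1) ^ (d - 1) := Nat.descFactorial_le_pow _ _
      _ ≤ (2 * k) ^ (d - 1) := Nat.pow_le_pow_left (by omega) _
  have hnatR : ((d - 1).factorial : ℝ) * ((d + k - 1).choose (d - 1) : ℝ) ≤ (2 * (k:ℝ)) ^ (d - 1) := by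
    exact_mod_cast hnat
  have hfpos : (0:ℝ) < ((d - 1).factorial : ℝ) := by exact_mod_cast Nat.factorial_pos _
  have htpow : (2 * (k:ℝ)) ^ (d - 1) ≤ (8 / ε ^ 2) ^ (d - 1) * (((d - 1).factorial : ℝ) * Real.exp t) := by
    have h2k : 2 * (k:ℝ) = 8 / ε ^ 2 * t := by rw [ht_def]; field_simp; ring
    rw [h2k, mul_pow]
    have htd : t ^ (d - 1) ≤ ((d - 1).factorial : ℝ) * Real.exp t := by
      have h := Real.pow_div_factorial_le_exp t ht0 (d - 1)
      rw [div_le_iff₀ hfpos, mul_comm] at h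
      exact h
    exact mul_le_mul_of_nonneg_left htd (by positivity)
  have hchoose : ((d + k - 1).choose k : ℝ) ≤ (8 / ε ^ 2) ^ (d - 1) * Real.exp t := by
    rw [hsymm]
    have h := hnatR.trans htpow
    rw [show (8 / ε ^ 2) ^ (d - 1) * (((d - 1).factorial : ℝ) * Real.exp t)
        = ((d - 1).factorial : ℝ) * ((8 / ε ^ 2) ^ (d - 1) * Real.exp t) from by ring] at h
    exact le_of_mul_le_mul_left h hfpos
  -- a^k bound
  have hak : a ^ k ≤ Real.exp (-(2 * t)) := by
    have h1 : (1:ℝ) - ε ^ 2 ≤ Real.exp (-(ε ^ 2)) := by linarith [Real.add_one_le_exp (-(ε ^ 2))]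
    have h2 : Real.exp (-(ε ^ 2)) = Real.exp (-(ε ^ 2) / 2) ^ 2 := by
      rw [← Real.exp_nat_mul]
      congr 1
      push_cast
      ring
    have ha_le : a ≤ Real.exp (-(ε ^ 2) / 2) := by
      rw [ha_def]
      calc Real.sqrt (1 - ε ^ 2) ≤ Real.sqrt (Real.exp (-(ε ^ 2) / 2) ^ 2) :=
            Real.sqrt_le_sqrt (by rw [← h2]; exact h1)
        _ = Real.exp (-(ε ^ 2) / 2) := Real.sqrt_sq (Real.exp_nonneg _)
    calc a ^ k ≤ Real.exp (-(ε ^ 2) / 2) ^ k := pow_le_pow_left₀ ha0 ha_le k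
      _ = Real.exp ((k:ℝ) * (-(ε ^ 2) / 2)) := (Real.exp_nat_mul _ k).symm
      _ = Real.exp (-(2 * t)) := by rw [ht_def]; congr 1; ring
  -- the key numeric inequality
  have hexp_t : u ^ (64 * d) ≤ Real.exp t := by
    have h1 : Real.exp (((64 * d : ℕ) : ℝ) * L) = Real.exp L ^ (64 * d) := Real.exp_nat_mul _ _
    have hEL : Real.exp L = u := by rw [hL_def, hu_def, Real.exp_log (by positivity)]
    rw [hEL] at h1
    rw [← h1]
    apply Real.exp_le_exp.mpr
    push_cast
    linarith [h64]
  have hA : (d:ℝ) - 1 ≤ u ^ (d - 1) := by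
    have h2p : (d - 1 : ℕ) < 2 ^ (d - 1) := Nat.lt_two_pow_self
    have h2pR : ((d - 1 : ℕ) : ℝ) ≤ (2:ℝ) ^ (d - 1) := by exact_mod_cast h2p.le
    have hcast : ((d - 1 : ℕ) : ℝ) = (d:ℝ) - 1 := by
      rw [Nat.cast_sub (by omega)]; norm_num
    rw [hcast] at h2pR
    exact h2pR.trans (pow_le_pow_left₀ (by norm_num) (by linarith) _)
  have hB : 8 * u ^ 4 ≤ u ^ 6 := by
    have hu2 : (16:ℝ) ≤ u ^ 2 := by nlinarith
    nlinarith [pow_pos hu0 4, mul_le_mul_of_nonneg_right hu2 (pow_pos hu0 4).le]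
  have hstep : 2 * ((d:ℝ) - 1) * (8 * u ^ 4) ^ (d - 1) ≤ u ^ (64 * d) := by
    have hBpow : (8 * u ^ 4) ^ (d - 1) ≤ (u ^ 6) ^ (d - 1) :=
      pow_le_pow_left₀ (by positivity) hB _
    have hc1 : 2 * ((d:ℝ) - 1) * (8 * u ^ 4) ^ (d - 1) ≤ (u * u ^ (d - 1)) * (u ^ 6) ^ (d - 1) := by
      apply mul_le_mul _ hBpow (by positivity) (by positivity)
      exact mul_le_mul (by linarith) hA (by linarith) (by linarith)
    have hexp_eq : (u * u ^ (d - 1)) * (u ^ 6) ^ (d - 1) = u ^ (1 + (d - 1) + 6 * (d - 1)) := by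
      rw [pow_add, pow_add, pow_one, ← pow_mul]
    rw [hexp_eq] at hc1
    exact hc1.trans (pow_le_pow_right₀ hu1.le (by omega))
  have hA2 : ((d:ℝ) - 1) * (8 * u ^ 4) ^ (d - 1) ≤ 1 / 2 * Real.exp t := by
    linarith [hstep.trans hexp_t]
  have hfact : (8:ℝ) / ε ^ 2 = 8 * u ^ 4 * ε ^ 2 := by
    rw [hu_def]; field_simp
  have hkey : ((d:ℝ) - 1) * (8 / ε ^ 2) ^ (d - 1) * Real.exp (-t) ≤ 1 / 2 * (ε ^ 2) ^ (d - 1) := by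
    calc ((d:ℝ) - 1) * (8 / ε ^ 2) ^ (d - 1) * Real.exp (-t)
        = (((d:ℝ) - 1) * (8 * u ^ 4) ^ (d - 1)) * ((ε ^ 2) ^ (d - 1) * Real.exp (-t)) := by
          rw [hfact, mul_pow]; ring
      _ ≤ (1 / 2 * Real.exp t) * ((ε ^ 2) ^ (d - 1) * Real.exp (-t)) :=
          mul_le_mul_of_nonneg_right hA2 (by positivity)
      _ = 1 / 2 * (ε ^ 2) ^ (d - 1) * (Real.exp t * Real.exp (-t)) := by ring
      _ = 1 / 2 * (ε ^ 2) ^ (d - 1) := by rw [← Real.exp_add]; simp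
  have hεpow : ε ^ (2 * d - 2) = (ε ^ 2) ^ (d - 1) := by
    rw [← pow_mul]
    congr 1
    omega
  calc ((d + k - 1).choose k : ℝ) *
        ∫ x in Set.Icc (0:ℝ) a, x ^ k * ((d:ℝ) - 1) * (1 - x) ^ (d - 2)
      ≤ ((8 / ε ^ 2) ^ (d - 1) * Real.exp t) * (a ^ k * ((d:ℝ) - 1)) :=
        mul_le_mul hchoose hInt hInt0 (by positivity)
    _ ≤ ((8 / ε ^ 2) ^ (d - 1) * Real.exp t) * (Real.exp (-(2 * t)) * ((d:ℝ) - 1)) := by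
        apply mul_le_mul_of_nonneg_left _ (by positivity)
        exact mul_le_mul_of_nonneg_right hak (by linarith)
    _ = ((d:ℝ) - 1) * (8 / ε ^ 2) ^ (d - 1) * (Real.exp t * Real.exp (-(2 * t))) := by ring
    _ = ((d:ℝ) - 1) * (8 / ε ^ 2) ^ (d - 1) * Real.exp (-t) := by
        rw [← Real.exp_add]; congr 1; ring
    _ ≤ 1 / 2 * (ε ^ 2) ^ (d - 1) := hkey
    _ = 1 / 2 * ε ^ (2 * d - 2) := by rw [hεpow]


end Paper
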